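/- Let F, G : (R₀, ∞) → (0, ∞) be differentiable, with F nondecreasing and positive, G nondecreasing, and suppose 4 F(R)² ≤ F'(R) · R^{−2} G'(R) for all R > R₀. Then for all R > r > R₀, one has (R² − r²)² ≤ G(R)/F(r). -/

import Mathlib

open Set

lemma aux_deriv_nonneg7 {f : ℝ → ℝ} {a s d : ℝ} (hs : a < s)
    (hm : MonotoneOn f (Set.Ioi a)) (hd : HasDerivAt f d s) : 0 ≤ d := by
  have h := hd.hasDerivWithinAt (s := Set.Ioi s)
  rw [hasDerivWithinAt_iff_tendsto_slope] at h
  have hset : Set.Ioi s \ {s} = Set.Ioi s := by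
    apply Set.diff_singleton_eq_self; simp
  rw [hset] at h
  refine ge_of_tendsto h ?_
  filter_upwards [self_mem_nhdsWithin] with x hx
  rw [slope_def_field]
  have hxs : s < x := hx
  have h1 : f s ≤ f x := hm (Set.mem_Ioi.mpr hs) (Set.mem_Ioi.mpr (hs.trans hxs)) hxs.le
  have h2 : (0:ℝ) ≤ x - s := by linarith
  exact div_nonneg (by linarith) h2

theorem stmt7 (R₀ : ℝ) (F G F' G' : ℝ → ℝ)
    (hF' : ∀ R ∈ Ioi R₀, HasDerivAt F (F' R) R)
    (hG' : ∀ R ∈ Ioi R₀, HasDerivAt G (G' R) R)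
    (hFpos : ∀ R ∈ Ioi R₀, 0 < F R)
    (hGpos : ∀ R ∈ Ioi R₀, 0 < G R)
    (hFmono : MonotoneOn F (Ioi R₀))
    (hGmono : MonotoneOn G (Ioi R₀))
    (hkey : ∀ R ∈ Ioi R₀, 4 * (F R) ^ 2 ≤ F' R * (G' R / R ^ 2)) :
    ∀ r R : ℝ, R₀ < r → r < R → (R ^ 2 - r ^ 2) ^ 2 ≤ G R / F r := by
  -- First, R₀ ≥ 0
  have hR0 : 0 ≤ R₀ := by
    by_contra h
    push_neg at h
    have h0 : (0:ℝ) ∈ Ioi R₀ := h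
    have hk := hkey 0 h0
    have hFp := hFpos 0 h0
    norm_num at hk
    nlinarith
  intro r R hr hrR
  have hrI : r ∈ Ioi R₀ := hr
  have hRI : R ∈ Ioi R₀ := hr.trans hrR
  have hFr : 0 < F r := hFpos r hrI
  have hGR : 0 < G R := hGpos R hRI
  set t : ℝ := Real.sqrt (G R * F r) with ht
  have htpos : 0 < t := Real.sqrt_pos.mpr (by positivity)
  have ht2 : t ^ 2 = G R * F r := Real.sq_sqrt (by positivity)
  -- the key function
  set Φ : ℝ → ℝ := fun s => G s / t - t * (F s)⁻¹ - 2 * s ^ 2 with hΦ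
  have hΦderiv : ∀ s ∈ Ioi R₀, HasDerivAt Φ
      (G' s / t + t * (F' s / (F s) ^ 2) - 2 * (2 * s)) s := by
    intro s hs
    have hFs : 0 < F s := hFpos s hs
    have h1 : HasDerivAt (fun s => G s / t) (G' s / t) s := (hG' s hs).div_const t
    have h2 : HasDerivAt (fun s => t * (F s)⁻¹) (t * (-F' s / (F s) ^ 2)) s :=
      ((hF' s hs).inv hFs.ne').const_mul t
    have h3 : HasDerivAt (fun s : ℝ => 2 * s ^ 2) (2 * (2 * s)) s := by
      simpa using (hasDerivAt_pow 2 s).const_mul (2:ℝ)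
    have := (h1.sub h2).sub h3
    exact this.congr_deriv (by ring)
  have hΦmono : MonotoneOn Φ (Ioi R₀) := by
    apply monotoneOn_of_hasDerivWithinAt_nonneg (convex_Ioi R₀)
      (f' := fun s => G' s / t + t * (F' s / (F s) ^ 2) - 2 * (2 * s))
    · intro s hs
      exact ((hΦderiv s hs).differentiableAt).continuousAt.continuousWithinAt
    · intro s hs
      rw [interior_Ioi] at hs
      exact ((hΦderiv s hs).hasDerivWithinAt)
    · intro s hs
      rw [interior_Ioi] at hs
      have hspos : 0 < s := lt_of_le_of_lt hR0 hs
      have hFs : 0 < F s := hFpos s hs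
      have hk := hkey s hs
      have hs2 : (0:ℝ) < s ^ 2 := by positivity
      have hk2 : 4 * F s ^ 2 * s ^ 2 ≤ F' s * G' s := by
        have h4 : 4 * F s ^ 2 * s ^ 2 ≤ (F' s * (G' s / s ^ 2)) * s ^ 2 := by nlinarith
        calc 4 * F s ^ 2 * s ^ 2 ≤ (F' s * (G' s / s ^ 2)) * s ^ 2 := h4
          _ = F' s * G' s := by field_simp
      have hF'nn : 0 ≤ F' s := aux_deriv_nonneg7 hs hFmono (hF' s hs)
      have hF'pos : 0 < F' s := by
        rcases hF'nn.lt_or_eq with h | h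
        · exact h
        · exfalso
          rw [← h, zero_mul] at hk2
          have : (0:ℝ) < 4 * F s ^ 2 * s ^ 2 := by positivity
          linarith
      have hG'pos : 0 < G' s := by
        by_contra hng
        push_neg at hng
        have h1 : F' s * G' s ≤ 0 := mul_nonpos_iff.mpr (Or.inl ⟨hF'pos.le, hng⟩)
        have h2 : (0:ℝ) < 4 * F s ^ 2 * s ^ 2 := by positivity
        linarith
      -- AM-GM: goal 0 ≤ G'/t + t*F'/F² - 4s
      have target0 : 4 * s * (t * F s ^ 2) ≤ G' s * F s ^ 2 + t ^ 2 * F' s := by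
        nlinarith [sq_nonneg (t * F' s - 2 * s * F s ^ 2),
          mul_le_mul_of_nonneg_right hk2 (sq_nonneg (F s))]
      have heq : G' s / t + t * (F' s / (F s) ^ 2) - 2 * (2 * s) =
          (G' s * F s ^ 2 + t ^ 2 * F' s - 4 * s * (t * F s ^ 2)) / (t * F s ^ 2) := by
        field_simp
        ring
      rw [heq]
      apply div_nonneg (by linarith) (by positivity)
  have hmain : Φ r ≤ Φ R := hΦmono hrI hRI hrR.le
  have hFR : 0 < F R := hFpos R hRI
  have hGr : 0 < G r := hGpos r hrI
  simp only [hΦ] at hmain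
  -- 2(R²−r²) ≤ G R/t + t/F r = 2 t / F r
  have h6 : 2 * (R ^ 2 - r ^ 2) ≤ G R / t + t * (F r)⁻¹ := by
    have hGrt : 0 < G r / t := by positivity
    have hFRt : 0 < t * (F R)⁻¹ := by positivity
    linarith
  have h7 : G R / t + t * (F r)⁻¹ = 2 * t / F r := by
    rw [eq_div_iff hFr.ne']
    field_simp
    nlinarith [ht2]
  have h8 : R ^ 2 - r ^ 2 ≤ t / F r := by
    rw [h7] at h6
    have : 2 * t / F r = 2 * (t / F r) := by ring
    rw [this] at h6
    linarith
  have hsub : 0 ≤ R ^ 2 - r ^ 2 := by nlinarith [hR0, hr, hrR]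
  have h9 : (R ^ 2 - r ^ 2) ^ 2 ≤ (t / F r) ^ 2 := by nlinarith
  calc (R ^ 2 - r ^ 2) ^ 2 ≤ (t / F r) ^ 2 := h9
    _ = t ^ 2 / F r ^ 2 := by rw [div_pow]
    _ = G R / F r := by rw [ht2]; field_simp
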